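/- For skew-symmetric matrices, the matrix exponential is Lipschitz near zero: for any A, B skew-symmetric d×d matrices with spectral norms ‖A‖ ≤ π/4 and ‖B‖ ≤ π/4, ‖exp(A) − exp(B)‖_F ≤ ‖A − B‖_F. -/

import Mathlib

open Matrix

section Aux

variable {n : Type*} [Fintype n] [DecidableEq n]

lemma sq_sum_eq_trace (X : Matrix n n ℝ) :
    ∑ i, ∑ j, (X i j) ^ 2 = (Xᵀ * X).trace := by
  simp only [Matrix.trace, Matrix.diag, Matrix.mul_apply, Matrix.transpose_apply, sq]
  exact Finset.sum_comm

lemma trace_unit_left {U : Matrix n n ℝ} (hU : Uᵀ * U = 1) (X : Matrix n n ℝ) :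
    (((U * X)ᵀ) * (U * X)).trace = (Xᵀ * X).trace := by
  rw [Matrix.transpose_mul, Matrix.mul_assoc, ← Matrix.mul_assoc Uᵀ, hU, Matrix.one_mul]

lemma trace_unit_right {V : Matrix n n ℝ} (hV : V * Vᵀ = 1) (X : Matrix n n ℝ) :
    (((X * V)ᵀ) * (X * V)).trace = (Xᵀ * X).trace := by
  rw [Matrix.transpose_mul, Matrix.mul_assoc, Matrix.trace_mul_comm,
    Matrix.mul_assoc, Matrix.mul_assoc, hV, Matrix.mul_one]

lemma exp_orth {C : Matrix n n ℝ} (hC : Cᵀ = -C) :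
    (NormedSpace.exp C)ᵀ * NormedSpace.exp C = 1 ∧
      NormedSpace.exp C * (NormedSpace.exp C)ᵀ = 1 := by
  have ht : (NormedSpace.exp C)ᵀ = NormedSpace.exp (-C) := by
    rw [← hC, Matrix.exp_transpose]
  constructor
  · rw [ht, ← Matrix.exp_add_of_commute _ _ (Commute.refl C).neg_left, neg_add_cancel,
      NormedSpace.exp_zero]
  · rw [ht, ← Matrix.exp_add_of_commute _ _ (Commute.refl C).neg_right, add_neg_cancel,
      NormedSpace.exp_zero]

attribute [local instance] Matrix.frobeniusNormedAddCommGroup Matrix.frobeniusNormedRing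
  Matrix.frobeniusNormedAlgebra

lemma frob_norm_eq_sqrt (X : Matrix n n ℝ) :
    ‖X‖ = Real.sqrt (∑ i, ∑ j, (X i j) ^ 2) := by
  have h2 : ∀ x : ℝ, x ^ (2 : ℝ) = x ^ (2 : ℕ) := fun x => by
    rw [show (2 : ℝ) = ((2 : ℕ) : ℝ) by norm_num, Real.rpow_natCast]
  rw [Matrix.frobenius_norm_def, Real.sqrt_eq_rpow]
  congr 1
  simp [h2, Real.norm_eq_abs, sq_abs]

lemma frob_norm_conj {U V : Matrix n n ℝ} (hU : Uᵀ * U = 1) (hV : V * Vᵀ = 1)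
    (X : Matrix n n ℝ) : ‖U * X * V‖ = ‖X‖ := by
  rw [frob_norm_eq_sqrt, frob_norm_eq_sqrt, sq_sum_eq_trace, sq_sum_eq_trace]
  rw [show U * X * V = U * (X * V) by rw [Matrix.mul_assoc], trace_unit_left hU,
    trace_unit_right hV]

lemma key [Nonempty n] (A B : Matrix n n ℝ) (hA : Aᵀ = -A) (hB : Bᵀ = -B) :
    ‖NormedSpace.exp A - NormedSpace.exp B‖ ≤ ‖A - B‖ := by
  set f : ℝ → Matrix n n ℝ := fun t => NormedSpace.exp (t • A) * NormedSpace.exp ((1 - t) • B)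
    with hf
  have hskew : ∀ (t : ℝ) (C : Matrix n n ℝ), Cᵀ = -C → (t • C)ᵀ = -(t • C) := by
    intro t C hC
    rw [Matrix.transpose_smul, hC, smul_neg]
  have hderiv : ∀ t : ℝ, HasDerivAt f
      (NormedSpace.exp (t • A) * (A - B) * NormedSpace.exp ((1 - t) • B)) t := by
    intro t
    have h1 : HasDerivAt (fun t : ℝ => NormedSpace.exp (t • A))
        (NormedSpace.exp (t • A) * A) t := hasDerivAt_exp_smul_const A t
    have hg : HasDerivAt (fun t : ℝ => 1 - t) (-1) t := by
      simpa using (hasDerivAt_id t).const_sub 1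
    have h2' : HasDerivAt (fun s : ℝ => NormedSpace.exp (s • B))
        (B * NormedSpace.exp ((1 - t) • B)) (1 - t) := hasDerivAt_exp_smul_const' B (1 - t)
    have h2 : HasDerivAt (fun t : ℝ => NormedSpace.exp ((1 - t) • B))
        (-(B * NormedSpace.exp ((1 - t) • B))) t := by
      have h2s := h2'.scomp t hg
      simp only [neg_one_smul] at h2s
      exact h2s
    have := h1.mul h2
    refine this.congr_deriv ?_
    symm
    rw [mul_sub, sub_mul, mul_assoc (NormedSpace.exp (t • A)) B, sub_eq_add_neg, mul_neg]
  have hbound : ∀ t : ℝ,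
      ‖NormedSpace.exp (t • A) * (A - B) * NormedSpace.exp ((1 - t) • B)‖ = ‖A - B‖ := by
    intro t
    have hU : (NormedSpace.exp (t • A))ᵀ * NormedSpace.exp (t • A) = 1 :=
      (exp_orth (hskew t A hA)).1
    have hV : NormedSpace.exp ((1 - t) • B) * (NormedSpace.exp ((1 - t) • B))ᵀ = 1 :=
      (exp_orth (hskew (1 - t) B hB)).2
    exact frob_norm_conj hU hV _
  have h01 : (0 : ℝ) ∈ Set.Icc (0 : ℝ) 1 := by norm_num
  have h11 : (1 : ℝ) ∈ Set.Icc (0 : ℝ) 1 := by norm_num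
  have hmv := (convex_Icc (0 : ℝ) 1).norm_image_sub_le_of_norm_hasDerivWithin_le
    (f' := fun t => NormedSpace.exp (t • A) * (A - B) * NormedSpace.exp ((1 - t) • B))
    (fun t _ => (hderiv t).hasDerivWithinAt) (fun t _ => (hbound t).le) h01 h11
  have hf1 : f 1 = NormedSpace.exp A := by
    have : ((1 : ℝ) - 1) • B = (0 : ℝ) • B := by norm_num
    simp only [hf, one_smul, this, zero_smul, NormedSpace.exp_zero, mul_one]
  have hf0 : f 0 = NormedSpace.exp B := by
    have : ((1 : ℝ) - 0) • B = B := by norm_num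
    simp only [hf, zero_smul, this, NormedSpace.exp_zero, one_mul]
  calc ‖NormedSpace.exp A - NormedSpace.exp B‖ = ‖f 1 - f 0‖ := by rw [hf1, hf0]
    _ ≤ ‖A - B‖ * ‖(1 : ℝ) - 0‖ := hmv
    _ = ‖A - B‖ := by norm_num

end Aux

/-- For skew-symmetric `A, B` with spectral norm at most `π/4`,
`‖exp(A) − exp(B)‖_F ≤ ‖A − B‖_F`. -/
theorem stmt_10 (d : ℕ) (A B : Matrix (Fin d) (Fin d) ℝ)
    (hA : Aᵀ = -A) (hB : Bᵀ = -B)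
    (hAn : ‖Matrix.toEuclideanCLM (𝕜 := ℝ) A‖ ≤ Real.pi / 4)
    (hBn : ‖Matrix.toEuclideanCLM (𝕜 := ℝ) B‖ ≤ Real.pi / 4) :
    Real.sqrt (∑ i, ∑ j, (NormedSpace.exp A i j - NormedSpace.exp B i j) ^ 2)
      ≤ Real.sqrt (∑ i, ∑ j, (A i j - B i j) ^ 2) := by
  rcases Nat.eq_zero_or_pos d with rfl | hd
  · simp
  haveI : Nonempty (Fin d) := Fin.pos_iff_nonempty.mp hd
  have h := key A B hA hB
  rw [frob_norm_eq_sqrt, frob_norm_eq_sqrt] at h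
  simpa [Matrix.sub_apply] using h
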